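/- Let f : ℝ → ℝ be f(x) = |x|. Then the scaled valley transform λ·V_λ(f)(x) = λ·(C^u_λ(f)(x) − f(x)) satisfies lim_{λ→∞} λ·V_λ(f)(0) = 1/4, and lim_{λ→∞} λ·V_λ(f)(x) = 0 for every x ≠ 0. -/

import Mathlib

open Filter Metric Set
open scoped Topology RealInnerProductSpace

/-- The convex envelope of `g`: pointwise supremum of convex functions below `g`. -/
noncomputable def convEnv {E : Type*} [NormedAddCommGroup E] [NormedSpace ℝ E]
    (g : E → ℝ) (x : E) : ℝ :=
  sSup {y : ℝ | ∃ h : E → ℝ, ConvexOn ℝ Set.univ h ∧ (∀ z, h z ≤ g z) ∧ y = h x}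

/-- Upper compensated convex transform. -/
noncomputable def upperT {E : Type*} [NormedAddCommGroup E] [NormedSpace ℝ E]
    (lam : ℝ) (g : E → ℝ) (x : E) : ℝ :=
  lam * ‖x‖ ^ 2 - convEnv (fun y => lam * ‖y‖ ^ 2 - g y) x

/-- Lower compensated convex transform. -/
noncomputable def lowerT {E : Type*} [NormedAddCommGroup E] [NormedSpace ℝ E]
    (lam : ℝ) (g : E → ℝ) (x : E) : ℝ :=
  convEnv (fun y => g y + lam * ‖y‖ ^ 2) x - lam * ‖x‖ ^ 2

lemma affine_convexOn (m b : ℝ) : ConvexOn ℝ Set.univ (fun y : ℝ => m * y + b) := by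
  refine ⟨convex_univ, fun x _ y _ p q hp hq hpq => le_of_eq ?_⟩
  simp only [smul_eq_mul]
  linear_combination (-b) * hpq

lemma bddAbove_set (g : ℝ → ℝ) (x : ℝ) :
    BddAbove {y : ℝ | ∃ h : ℝ → ℝ, ConvexOn ℝ Set.univ h ∧ (∀ z, h z ≤ g z) ∧ y = h x} := by
  refine ⟨g x, ?_⟩
  rintro y ⟨h, -, hle, rfl⟩
  exact hle x

lemma le_convEnv (g h : ℝ → ℝ) (hc : ConvexOn ℝ Set.univ h) (hle : ∀ z, h z ≤ g z) (x : ℝ) :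
    h x ≤ convEnv g x :=
  le_csSup (bddAbove_set g x) ⟨h, hc, hle, rfl⟩

lemma convEnv_eq_of_touch (g h : ℝ → ℝ) (hc : ConvexOn ℝ Set.univ h) (hle : ∀ z, h z ≤ g z)
    (x : ℝ) (hx : h x = g x) : convEnv g x = g x := by
  refine le_antisymm (csSup_le ⟨h x, h, hc, hle, rfl⟩ ?_) (hx ▸ le_convEnv g h hc hle x)
  rintro y ⟨h', -, hle', rfl⟩
  exact hle' x

lemma convEnv_zero (lam : ℝ) (hl : 0 < lam) :
    convEnv (fun y : ℝ => lam * ‖y‖ ^ 2 - |y|) 0 = -(1 / (4 * lam)) := by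
  have hle : ∀ z : ℝ, -(1 / (4 * lam)) ≤ lam * ‖z‖ ^ 2 - |z| := by
    intro z
    rw [Real.norm_eq_abs]
    have h2 : (0:ℝ) ≤ (2 * lam * |z| - 1) ^ 2 := sq_nonneg _
    have h3 : (0:ℝ) < 4 * lam := by linarith
    have h4 : (4 * lam) * (lam * |z| ^ 2 - |z| + 1 / (4 * lam)) = (2 * lam * |z| - 1) ^ 2 := by
      field_simp
      ring
    nlinarith [h2, h3, h4]
  refine le_antisymm ?_ ?_
  · refine csSup_le ⟨-(1 / (4 * lam)), fun _ => -(1 / (4 * lam)), convexOn_const _ convex_univ,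
      hle, rfl⟩ ?_
    rintro y ⟨h, hc, hle', rfl⟩
    set a : ℝ := 1 / (2 * lam) with ha
    have hkey := hc.2 (Set.mem_univ a) (Set.mem_univ (-a)) (by norm_num : (0:ℝ) ≤ (1:ℝ)/2)
      (by norm_num : (0:ℝ) ≤ (1:ℝ)/2) (by norm_num)
    simp only [smul_eq_mul] at hkey
    have h0 : (1:ℝ)/2 * a + 1/2 * (-a) = 0 := by ring
    rw [h0] at hkey
    have ha' : h a ≤ lam * ‖a‖ ^ 2 - |a| := hle' a
    have ha'' : h (-a) ≤ lam * ‖(-a)‖ ^ 2 - |(-a)| := hle' (-a)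
    have hgapos : (0:ℝ) < a := by positivity
    have hna : ‖a‖ = a := by rw [Real.norm_eq_abs, abs_of_pos hgapos]
    have hnna : ‖(-a)‖ = a := by rw [Real.norm_eq_abs, abs_neg, abs_of_pos hgapos]
    have habs : |a| = a := abs_of_pos hgapos
    have habs' : |(-a)| = a := by rw [abs_neg, habs]
    rw [hna, habs] at ha'
    rw [hnna, habs'] at ha''
    have hval : lam * a ^ 2 - a = -(1 / (4 * lam)) := by
      rw [ha]; field_simp; ring
    linarith [ha', ha'', hkey, hval]
  · exact le_convEnv _ _ (convexOn_const _ convex_univ) hle 0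

lemma convEnv_far (lam x : ℝ) (hl : 0 < lam) (hx : 1 / (2 * lam) ≤ |x|) :
    convEnv (fun y : ℝ => lam * ‖y‖ ^ 2 - |y|) x = lam * ‖x‖ ^ 2 - |x| := by
  have hx0 : x ≠ 0 := by
    intro h
    rw [h, abs_zero] at hx
    have hpos : (0:ℝ) < 1 / (2 * lam) := by positivity
    linarith
  have hhalf : lam * (1 / (2 * lam)) = 1 / 2 := by field_simp
  rcases lt_or_gt_of_ne hx0 with hxneg | hxpos
  · -- x < 0 : tangent line with slope 2λx + 1
    have habs : |x| = -x := abs_of_neg hxneg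
    rw [habs] at hx
    have h1 : (0:ℝ) ≤ lam * (-x) - 1/2 := by
      nlinarith [mul_le_mul_of_nonneg_left hx hl.le]
    refine convEnv_eq_of_touch _ (fun y => (2 * lam * x + 1) * y + (-lam * x ^ 2))
      (affine_convexOn _ _) ?_ x ?_
    · intro z
      show (2 * lam * x + 1) * z + (-lam * x ^ 2) ≤ lam * ‖z‖ ^ 2 - |z|
      rw [Real.norm_eq_abs, sq_abs]
      rcases abs_cases z with ⟨hz, hz'⟩ | ⟨hz, hz'⟩ <;> rw [hz]
      · nlinarith [sq_nonneg (lam * z - 1/2),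
          mul_nonneg h1 (by nlinarith : (0:ℝ) ≤ lam * (-x) + 1/2 + 2 * lam * z),
          mul_pos hl hl, sq_nonneg (z - x), hl]
      · nlinarith [sq_nonneg (z - x), hl.le]
    · show (2 * lam * x + 1) * x + (-lam * x ^ 2) = lam * ‖x‖ ^ 2 - |x|
      rw [Real.norm_eq_abs, sq_abs, habs]; ring
  · -- x > 0
    have habs : |x| = x := abs_of_pos hxpos
    rw [habs] at hx
    have h1 : (0:ℝ) ≤ lam * x - 1/2 := by
      nlinarith [mul_le_mul_of_nonneg_left hx hl.le]
    refine convEnv_eq_of_touch _ (fun y => (2 * lam * x - 1) * y + (-lam * x ^ 2))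
      (affine_convexOn _ _) ?_ x ?_
    · intro z
      show (2 * lam * x - 1) * z + (-lam * x ^ 2) ≤ lam * ‖z‖ ^ 2 - |z|
      rw [Real.norm_eq_abs, sq_abs]
      rcases abs_cases z with ⟨hz, hz'⟩ | ⟨hz, hz'⟩ <;> rw [hz]
      · nlinarith [sq_nonneg (z - x), hl.le]
      · nlinarith [sq_nonneg (lam * z + 1/2),
          mul_nonneg h1 (by nlinarith : (0:ℝ) ≤ lam * x + 1/2 - 2 * lam * z),
          mul_pos hl hl, sq_nonneg (z - x), hl]
    · show (2 * lam * x - 1) * x + (-lam * x ^ 2) = lam * ‖x‖ ^ 2 - |x|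
      rw [Real.norm_eq_abs, sq_abs, habs]; ring

theorem stmt_1 :
    Tendsto (fun lam : ℝ => lam * (upperT lam (fun y => |y|) 0 - |(0 : ℝ)|)) atTop
      (nhds (1 / 4)) ∧
    ∀ x : ℝ, x ≠ 0 →
      Tendsto (fun lam : ℝ => lam * (upperT lam (fun y => |y|) x - |x|)) atTop (nhds 0) := by
  constructor
  · refine Tendsto.congr' ?_ tendsto_const_nhds
    filter_upwards [eventually_ge_atTop (1:ℝ)] with lam hlam
    have hl : (0:ℝ) < lam := by linarith
    have := convEnv_zero lam hl
    simp only [upperT, this, norm_zero, abs_zero]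
    field_simp
    ring
  · intro x hx
    refine Tendsto.congr' ?_ tendsto_const_nhds
    have hxabs : 0 < |x| := abs_pos.mpr hx
    filter_upwards [eventually_ge_atTop (max 1 (1 / (2 * |x|)))] with lam hlam
    have hl : (0:ℝ) < lam := lt_of_lt_of_le one_pos (le_trans (le_max_left _ _) hlam)
    have hlam2 : 1 / (2 * |x|) ≤ lam := le_trans (le_max_right _ _) hlam
    have hfar : 1 / (2 * lam) ≤ |x| := by
      rw [div_le_iff₀ (by positivity)]
      rw [div_le_iff₀ (by positivity)] at hlam2
      linarith
    have := convEnv_far lam x hl hfar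
    simp only [upperT, this]
    ring
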